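/- For every ν < 0, the function x ↦ D_{ν−1}(x)² / (D_ν(x) · D_{ν−2}(x)) is strictly decreasing on ℝ. -/

import Mathlib

open MeasureTheory Real Filter

noncomputable def G (ν x : ℝ) : ℝ :=
  ∫ t in Set.Ioi (0:ℝ), t ^ (-ν - 1) * Real.exp (-t^2/2 - x*t)

noncomputable def D (ν x : ℝ) : ℝ :=
  Real.exp (-x^2/4) / Real.Gamma (-ν) * G ν x

open Set
open scoped NNReal ENNReal

noncomputable def M (s x : ℝ) : ℝ := ∫ t in Set.Ioi (0:ℝ), t ^ s * Real.exp (-t^2/2 - x*t)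

lemma contOn (s x : ℝ) : ContinuousOn (fun t : ℝ => t ^ s * Real.exp (-t^2/2 - x*t)) (Set.Ioi 0) := by
  apply ContinuousOn.mul
  · intro t ht
    exact ((Real.continuousAt_rpow_const t s (Or.inl (ne_of_gt ht))).continuousWithinAt)
  · exact (Real.continuous_exp.comp (by continuity)).continuousOn

lemma integrable_M {s : ℝ} (hs : -1 < s) (x : ℝ) :
    IntegrableOn (fun t : ℝ => t ^ s * Real.exp (-t^2/2 - x*t)) (Set.Ioi 0) := by
  have hg : IntegrableOn (fun t : ℝ => Real.exp ((1-x)^2/2) * (Real.exp (-t) * t ^ ((s+1)-1))) (Set.Ioi 0) :=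
    (Real.GammaIntegral_convergent (by linarith : (0:ℝ) < s + 1)).const_mul _
  apply Integrable.mono hg ((contOn s x).aestronglyMeasurable measurableSet_Ioi)
  filter_upwards [ae_restrict_mem measurableSet_Ioi] with t ht
  have ht0 : (0:ℝ) < t := ht
  have hts : (0:ℝ) < t ^ s := Real.rpow_pos_of_pos ht0 s
  have hts1 : (0:ℝ) < t ^ ((s+1)-1) := Real.rpow_pos_of_pos ht0 _
  have h2 : Real.exp (-t^2/2 - x*t) ≤ Real.exp ((1-x)^2/2) * Real.exp (-t) := by
    rw [← Real.exp_add]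
    apply Real.exp_le_exp.2
    nlinarith [sq_nonneg (t - (1-x))]
  have h1 : t ^ s * Real.exp (-t^2/2 - x*t) ≤ Real.exp ((1-x)^2/2) * (Real.exp (-t) * t ^ ((s+1)-1)) := by
    have hss : t ^ ((s+1)-1) = t ^ s := by norm_num
    calc t ^ s * Real.exp (-t^2/2 - x*t) ≤ t ^ s * (Real.exp ((1-x)^2/2) * Real.exp (-t)) :=
          mul_le_mul_of_nonneg_left h2 hts.le
      _ = Real.exp ((1-x)^2/2) * (Real.exp (-t) * t ^ ((s+1)-1)) := by rw [hss]; ring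
  rw [Real.norm_eq_abs, Real.norm_eq_abs, abs_of_nonneg (by positivity), abs_of_nonneg (by positivity)]
  exact h1

lemma M_pos {s : ℝ} (hs : -1 < s) (x : ℝ) : 0 < M s x := by
  have hnn : 0 ≤ᶠ[ae (volume.restrict (Set.Ioi (0:ℝ)))] fun t : ℝ => t ^ s * Real.exp (-t^2/2 - x*t) := by
    filter_upwards [ae_restrict_mem measurableSet_Ioi] with t ht
    have ht0 : (0:ℝ) < t := ht
    positivity
  rw [M, setIntegral_pos_iff_support_of_nonneg_ae hnn (integrable_M hs x)]
  have hsub : Set.Ioi (0:ℝ) ⊆ Function.support (fun t : ℝ => t ^ s * Real.exp (-t^2/2 - x*t)) ∩ Set.Ioi 0 := by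
    intro t ht
    have ht0 : (0:ℝ) < t := ht
    exact ⟨ne_of_gt (by positivity), ht⟩
  calc (0:ℝ≥0∞) < volume (Set.Ioi (0:ℝ)) := by simp
    _ ≤ _ := measure_mono hsub

lemma M_rec {s : ℝ} (hs : 0 < s) (x : ℝ) :
    M (s+1) x = s * M (s-1) x - x * M s x := by
  set g : ℝ → ℝ := fun t => t ^ s * Real.exp (-t^2/2 - x*t) with hg
  set g' : ℝ → ℝ := fun t =>
    s * (t ^ (s-1) * Real.exp (-t^2/2 - x*t)) - x * (t ^ s * Real.exp (-t^2/2 - x*t))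
      - (t ^ (s+1) * Real.exp (-t^2/2 - x*t)) with hg'
  have hderiv : ∀ t ∈ Set.Ioi (0:ℝ), HasDerivAt g (g' t) t := by
    intro t ht
    have ht0 : (0:ℝ) < t := ht
    have h1 : HasDerivAt (fun u : ℝ => u ^ s) (s * t ^ (s-1)) t :=
      Real.hasDerivAt_rpow_const (Or.inl (ne_of_gt ht0))
    have h3 : HasDerivAt (fun u : ℝ => -u^2/2 - x*u) (-t - x) t := by
      have h4 := ((hasDerivAt_pow 2 t).const_mul (-1/2 : ℝ)).sub ((hasDerivAt_id t).const_mul x)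
      have h5 : (fun u : ℝ => -u^2/2 - x*u) = (fun y => -1/2 * y^2) - fun y => x * id y := by
        funext u; simp [id]; ring
      rw [h5]; exact h4.congr_deriv (by norm_num; ring)
    have h2 : HasDerivAt (fun u : ℝ => Real.exp (-u^2/2 - x*u)) ((-t - x) * Real.exp (-t^2/2 - x*t)) t := by
      simpa [mul_comm, Function.comp_def] using (Real.hasDerivAt_exp (-t^2/2 - x*t)).comp t h3
    have h5 := h1.mul h2
    have heq : g' t = s * t ^ (s-1) * Real.exp (-t^2/2 - x*t)
        + t ^ s * ((-t - x) * Real.exp (-t^2/2 - x*t)) := by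
      have hsplit : t ^ (s+1) = t ^ s * t := Real.rpow_add_one (ne_of_gt ht0) s
      simp only [hg']
      rw [hsplit]; ring
    rw [heq]
    exact h5
  have hcont : ContinuousWithinAt g (Set.Ici (0:ℝ)) 0 := by
    apply ContinuousWithinAt.mul
    · exact (Real.continuousAt_rpow_const 0 s (Or.inr hs.le)).continuousWithinAt
    · exact (Real.continuous_exp.comp (by continuity)).continuousWithinAt
  have hg'int : IntegrableOn g' (Set.Ioi 0) := by
    apply Integrable.sub
    apply Integrable.sub
    · exact (integrable_M (by linarith) x).const_mul s
    · exact (integrable_M (by linarith : (-1:ℝ) < s) x).const_mul x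
    · exact integrable_M (by linarith : (-1:ℝ) < s+1) x
  have htop : Tendsto g atTop (nhds 0) := by
    apply squeeze_zero' (g := fun t => Real.exp (-t))
    · filter_upwards [eventually_gt_atTop (0:ℝ)] with t ht0
      have : (0:ℝ) < g t := by
        simp only [hg]; positivity
      exact this.le
    · filter_upwards [eventually_ge_atTop (1:ℝ), eventually_ge_atTop (2*(s-x+1))] with t ht1 ht2
      have ht0 : (0:ℝ) < t := by linarith
      have hlog : Real.log t ≤ t := by
        have := Real.log_le_sub_one_of_pos ht0; linarith
      simp only [hg]
      rw [Real.rpow_def_of_pos ht0, ← Real.exp_add]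
      apply Real.exp_le_exp.2
      nlinarith
    · exact Real.tendsto_exp_neg_atTop_nhds_zero
  have key := integral_Ioi_of_hasDerivAt_of_tendsto hcont hderiv hg'int htop
  have hg0 : g 0 = 0 := by
    simp only [hg]
    rw [Real.zero_rpow (ne_of_gt hs)]; ring
  rw [hg0, sub_zero] at key
  have hsplit2 : ∫ t in Set.Ioi (0:ℝ), g' t =
      s * M (s-1) x - x * M s x - M (s+1) x := by
    simp only [hg']
    rw [integral_sub, integral_sub]
    · rw [M, M, M, integral_const_mul, integral_const_mul]
    · exact ((integrable_M (by linarith) x).const_mul s)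
    · exact ((integrable_M (by linarith : (-1:ℝ) < s) x).const_mul x)
    · exact (((integrable_M (by linarith) x).const_mul s).sub ((integrable_M (by linarith : (-1:ℝ) < s) x).const_mul x))
    · exact integrable_M (by linarith : (-1:ℝ) < s+1) x
  rw [hsplit2] at key
  linarith [key]

lemma hasDerivAt_M {s : ℝ} (hs : -1 < s) (x₀ : ℝ) :
    HasDerivAt (fun x => M s x) (-M (s+1) x₀) x₀ := by
  have key := hasDerivAt_integral_of_dominated_loc_of_deriv_le
    (F := fun (x : ℝ) (t : ℝ) => t ^ s * Real.exp (-t^2/2 - x*t))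
    (F' := fun (x : ℝ) (t : ℝ) => -(t ^ (s+1) * Real.exp (-t^2/2 - x*t)))
    (x₀ := x₀)
    (bound := fun t => t ^ (s+1) * Real.exp (-t^2/2 - (x₀ - 1)*t))
    (μ := volume.restrict (Set.Ioi 0))
    (s := Metric.ball x₀ 1) (Metric.ball_mem_nhds x₀ one_pos)
    ?hmeas ?hint ?hmeas' ?hbound ?hboundint ?hderiv
  · have h := key.2
    rw [M, ← integral_neg]
    exact h
  case hmeas =>
    filter_upwards with x
    exact (contOn s x).aestronglyMeasurable measurableSet_Ioi
  case hint => exact integrable_M hs x₀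
  case hmeas' =>
    exact (((contOn (s+1) x₀).neg).aestronglyMeasurable measurableSet_Ioi)
  case hbound =>
    filter_upwards [ae_restrict_mem measurableSet_Ioi] with t ht x hx
    have ht0 : (0:ℝ) < t := ht
    rw [norm_neg, Real.norm_eq_abs, abs_of_nonneg (by positivity)]
    have hx1 : |x - x₀| < 1 := by
      have := Metric.mem_ball.1 hx
      rwa [Real.dist_eq] at this
    have : Real.exp (-t^2/2 - x*t) ≤ Real.exp (-t^2/2 - (x₀-1)*t) := by
      apply Real.exp_le_exp.2
      have : (x₀ - 1) * t ≤ x * t := by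
        apply mul_le_mul_of_nonneg_right _ ht0.le
        have := abs_lt.1 hx1
        linarith [this.1]
      linarith
    exact mul_le_mul_of_nonneg_left this (le_of_lt (Real.rpow_pos_of_pos ht0 _))
  case hboundint => exact integrable_M (by linarith) (x₀ - 1)
  case hderiv =>
    filter_upwards [ae_restrict_mem measurableSet_Ioi] with t ht x hx
    have ht0 : (0:ℝ) < t := ht
    have h1 : HasDerivAt (fun x : ℝ => -t^2/2 - x*t) (-t) x := by
      have h4 := ((hasDerivAt_id x).const_mul t).const_sub (-t^2/2)
      have h5 : (fun x : ℝ => -t^2/2 - x*t) = fun x => -t^2/2 - t * id x := by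
        funext u; simp [id]; ring
      rw [h5]; exact h4.congr_deriv (by simp)
    have h2 := ((Real.hasDerivAt_exp (-t^2/2 - x*t)).comp x h1).const_mul (t ^ s)
    have heq : -(t ^ (s+1) * Real.exp (-t^2/2 - x*t)) = t ^ s * (Real.exp (-t^2/2 - x*t) * (-t)) := by
      rw [Real.rpow_add_one (ne_of_gt ht0) s]; ring
    rw [heq]
    exact h2

lemma quad_pos {a : ℝ} (ha : -1 < a) (x p0 p1 p2 : ℝ) (hp : ¬(p0 = 0 ∧ p1 = 0 ∧ p2 = 0)) :
    0 < p0^2 * M a x + 2*p0*p1 * M (a+1) x + (p1^2 + 2*p0*p2) * M (a+2) x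
      + 2*p1*p2 * M (a+3) x + p2^2 * M (a+4) x := by
  set w : ℝ → ℝ := fun t => Real.exp (-t^2/2 - x*t) with hw
  set f : ℝ → ℝ := fun t => (p0 + p1*t + p2*t^2)^2 * (t ^ a * w t) with hf
  have hpt : ∀ t ∈ Set.Ioi (0:ℝ), f t = p0^2 * (t ^ a * w t) + 2*p0*p1 * (t ^ (a+1) * w t)
      + (p1^2 + 2*p0*p2) * (t ^ (a+2) * w t) + 2*p1*p2 * (t ^ (a+3) * w t)
      + p2^2 * (t ^ (a+4) * w t) := by
    intro t ht
    have ht0 : (0:ℝ) < t := ht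
    have e1 : t ^ (a+1) = t ^ a * t := Real.rpow_add_one (ne_of_gt ht0) a
    have e2 : t ^ (a+2) = t ^ (a+1) * t := by
      rw [show a+2 = (a+1)+1 by ring, Real.rpow_add_one (ne_of_gt ht0)]
    have e3 : t ^ (a+3) = t ^ (a+2) * t := by
      rw [show a+3 = (a+2)+1 by ring, Real.rpow_add_one (ne_of_gt ht0)]
    have e4 : t ^ (a+4) = t ^ (a+3) * t := by
      rw [show a+4 = (a+3)+1 by ring, Real.rpow_add_one (ne_of_gt ht0)]
    simp only [hf]
    rw [e4, e3, e2, e1]; ring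
  have i0 := integrable_M ha x
  have i1 := integrable_M (by linarith : (-1:ℝ) < a+1) x
  have i2 := integrable_M (by linarith : (-1:ℝ) < a+2) x
  have i3 := integrable_M (by linarith : (-1:ℝ) < a+3) x
  have i4 := integrable_M (by linarith : (-1:ℝ) < a+4) x
  have hsum : IntegrableOn (fun t : ℝ => p0^2 * (t ^ a * w t) + 2*p0*p1 * (t ^ (a+1) * w t)
      + (p1^2 + 2*p0*p2) * (t ^ (a+2) * w t) + 2*p1*p2 * (t ^ (a+3) * w t)
      + p2^2 * (t ^ (a+4) * w t)) (Set.Ioi 0) :=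
    (((((i0.const_mul _).add (i1.const_mul _)).add (i2.const_mul _)).add
      (i3.const_mul _)).add (i4.const_mul _))
  have hfi : IntegrableOn f (Set.Ioi 0) := hsum.congr_fun (fun t ht => (hpt t ht).symm) measurableSet_Ioi
  have hval : ∫ t in Set.Ioi (0:ℝ), f t = p0^2 * M a x + 2*p0*p1 * M (a+1) x
      + (p1^2 + 2*p0*p2) * M (a+2) x + 2*p1*p2 * M (a+3) x + p2^2 * M (a+4) x := by
    rw [setIntegral_congr_fun measurableSet_Ioi hpt]
    rw [integral_add, integral_add, integral_add, integral_add]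
    · simp only [M, integral_const_mul, hw]
    · exact i0.const_mul _
    · exact i1.const_mul _
    · exact (i0.const_mul _).add (i1.const_mul _)
    · exact i2.const_mul _
    · exact ((i0.const_mul _).add (i1.const_mul _)).add (i2.const_mul _)
    · exact i3.const_mul _
    · exact (((i0.const_mul _).add (i1.const_mul _)).add (i2.const_mul _)).add (i3.const_mul _)
    · exact i4.const_mul _
  rw [← hval]
  -- positivity of the integral
  have hnn : 0 ≤ᶠ[ae (volume.restrict (Set.Ioi (0:ℝ)))] f := by
    filter_upwards [ae_restrict_mem measurableSet_Ioi] with t ht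
    have ht0 : (0:ℝ) < t := ht
    have : (0:ℝ) ≤ (p0 + p1*t + p2*t^2)^2 * (t ^ a * w t) := by positivity
    exact this
  rw [setIntegral_pos_iff_support_of_nonneg_ae hnn hfi]
  -- find a point where the polynomial is nonzero
  have hex : ∃ t₀ : ℝ, 0 < t₀ ∧ p0 + p1*t₀ + p2*t₀^2 ≠ 0 := by
    by_contra hcon
    push_neg at hcon
    have h1 := hcon 1 one_pos
    have h2 := hcon 2 two_pos
    have h3 := hcon 3 (by norm_num)
    apply hp
    refine ⟨by nlinarith, by nlinarith, by nlinarith⟩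
  obtain ⟨t₀, ht₀, hpt₀⟩ := hex
  set U : Set ℝ := Set.Ioi 0 ∩ {t : ℝ | p0 + p1*t + p2*t^2 ≠ 0} with hU
  have hUopen : IsOpen U := by
    apply isOpen_Ioi.inter
    have hcont : Continuous (fun t : ℝ => p0 + p1*t + p2*t^2) := by continuity
    exact isOpen_compl_singleton.preimage hcont
  have hUne : U.Nonempty := ⟨t₀, ht₀, hpt₀⟩
  have hUsub : U ⊆ Function.support f ∩ Set.Ioi 0 := by
    rintro t ⟨ht, hpt'⟩
    have ht0 : (0:ℝ) < t := ht
    refine ⟨?_, ht⟩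
    simp only [hf, Function.mem_support]
    have hne : p0 + p1*t + p2*t^2 ≠ 0 := hpt'
    have h1 : (0:ℝ) < (p0 + p1*t + p2*t^2)^2 := pow_two_pos_of_ne_zero hne
    have h2 : (0:ℝ) < t ^ a * w t := by positivity
    exact ne_of_gt (mul_pos h1 h2)
  calc (0:ℝ≥0∞) < volume U := hUopen.measure_pos volume hUne
    _ ≤ _ := measure_mono hUsub

lemma core {a : ℝ} (ha : -1 < a) :
    StrictAnti (fun x : ℝ => (M (a+1) x)^2 / (M a x * M (a+2) x)) := by
  apply strictAnti_of_deriv_neg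
  intro x
  set A := M a x with hA
  set B := M (a+1) x with hB
  set C := M (a+2) x with hC'
  set D3 := M (a+3) x with hD3'
  set D4 := M (a+4) x with hD4'
  have hApos : 0 < A := M_pos ha x
  have hBpos : 0 < B := M_pos (by linarith) x
  have hCpos : 0 < C := M_pos (by linarith) x
  -- recurrences
  have hC : C = (a+1) * A - x * B := by
    have h := M_rec (s := a+1) (by linarith) x
    rw [show (a+1)+1 = a+2 by ring, show (a+1)-1 = a by ring] at h
    rw [hC', hA, hB]; exact h
  have hD3 : D3 = (a+2) * B - x * C := by
    have h := M_rec (s := a+2) (by linarith) x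
    rw [show (a+2)+1 = a+3 by ring, show (a+2)-1 = a+1 by ring] at h
    rw [hD3', hB, hC']; exact h
  have hD4 : D4 = (a+3) * C - x * D3 := by
    have h := M_rec (s := a+3) (by linarith) x
    rw [show (a+3)+1 = a+4 by ring, show (a+3)-1 = a+2 by ring] at h
    rw [hD4', hC', hD3']; exact h
  -- Cauchy-Schwarz: A*C - B^2 > 0
  have hV : 0 < A*C - B^2 := by
    have h := quad_pos ha x (-B) A 0 (by
      intro ⟨_, h2, _⟩
      exact absurd h2 (ne_of_gt hApos))
    rw [← hA, ← hB, ← hC', ← hD3', ← hD4'] at h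
    nlinarith
  -- the Hankel positivity
  have hE := quad_pos ha x (-(C^2 - B*D3)) (-(A*D3 - B*C)) (A*C - B^2) (by
    intro ⟨_, _, h3⟩
    exact absurd h3 (ne_of_gt hV))
  rw [← hA, ← hB, ← hC', ← hD3', ← hD4'] at hE
  have hDelta : 0 < 2*A*C^2 - B^2*C - A*B*D3 := by
    have hid : (-(C^2 - B*D3))^2 * A + 2*(-(C^2 - B*D3))*(-(A*D3 - B*C)) * B
        + ((-(A*D3 - B*C))^2 + 2*(-(C^2 - B*D3))*(A*C - B^2)) * C
        + 2*(-(A*D3 - B*C))*(A*C - B^2) * D3 + (A*C - B^2)^2 * D4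
        = (A*C - B^2) * (2*A*C^2 - B^2*C - A*B*D3) := by
      rw [hD4, hD3, hC]; ring
    nlinarith [hE, hV]
  -- derivative computation
  have hdB : HasDerivAt (fun x => M (a+1) x) (-C) x := by
    have := hasDerivAt_M (by linarith : (-1:ℝ) < a+1) x
    rwa [show (a+1)+1 = a+2 by ring, ← hC'] at this
  have hdA : HasDerivAt (fun x => M a x) (-B) x := by
    have := hasDerivAt_M ha x
    rwa [← hB] at this
  have hdC : HasDerivAt (fun x => M (a+2) x) (-D3) x := by
    have := hasDerivAt_M (by linarith : (-1:ℝ) < a+2) x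
    rwa [show (a+2)+1 = a+3 by ring, ← hD3'] at this
  have hnum : HasDerivAt (fun x => (M (a+1) x)^2) ((2:ℕ) * B^(2-1) * (-C)) x := hdB.pow 2
  have hden : HasDerivAt (fun x => M a x * M (a+2) x) ((-B) * C + A * (-D3)) x := hdA.mul hdC
  have hdenne : A * C ≠ 0 := ne_of_gt (mul_pos hApos hCpos)
  have hdiv := hnum.div hden hdenne
  rw [show deriv (fun x => (M (a+1) x)^2 / (M a x * M (a+2) x)) x = _ from hdiv.deriv]
  apply div_neg_of_neg_of_pos
  · have : ((2:ℕ) * B^(2-1) * (-C)) * (A*C) - B^2 * ((-B) * C + A * (-D3))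
        = -(B * (2*A*C^2 - B^2*C - A*B*D3)) := by push_cast; ring
    rw [this]
    exact neg_lt_zero.mpr (mul_pos hBpos hDelta)
  · positivity

theorem stmt8 (ν : ℝ) (hν : ν < 0) :
    StrictAnti (fun x : ℝ => (D (ν - 1) x) ^ 2 / (D ν x * D (ν - 2) x)) := by
  have ha : (-1:ℝ) < -ν - 1 := by linarith
  have hg := core ha
  rw [show -ν - 1 + 1 = -(ν-1) - 1 by ring, show -ν - 1 + 2 = -(ν-2) - 1 by ring] at hg
  -- G ν x = M (-ν-1) x definitionally
  have hGM : ∀ μ x : ℝ, G μ x = M (-μ - 1) x := fun μ x => rfl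
  have hK : 0 < Real.Gamma (-ν) * Real.Gamma (-(ν-2)) / Real.Gamma (-(ν-1))^2 := by
    have h0 : 0 < Real.Gamma (-ν) := Real.Gamma_pos_of_pos (by linarith)
    have h2 : 0 < Real.Gamma (-(ν-2)) := Real.Gamma_pos_of_pos (by linarith)
    have h1 : 0 < Real.Gamma (-(ν-1)) := Real.Gamma_pos_of_pos (by linarith)
    positivity
  have hval : ∀ x : ℝ, (D (ν - 1) x) ^ 2 / (D ν x * D (ν - 2) x)
      = (Real.Gamma (-ν) * Real.Gamma (-(ν-2)) / Real.Gamma (-(ν-1))^2) *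
        ((M (-(ν-1) - 1) x)^2 / (M (-ν - 1) x * M (-(ν-2) - 1) x)) := by
    intro x
    have hA : 0 < M (-ν - 1) x := M_pos ha x
    have hC : 0 < M (-(ν-2) - 1) x := M_pos (by linarith) x
    have h0 : 0 < Real.Gamma (-ν) := Real.Gamma_pos_of_pos (by linarith)
    have h2 : 0 < Real.Gamma (-(ν-2)) := Real.Gamma_pos_of_pos (by linarith)
    have h1 : 0 < Real.Gamma (-(ν-1)) := Real.Gamma_pos_of_pos (by linarith)
    have he : (0:ℝ) < Real.exp (-x^2/4) := Real.exp_pos _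
    rw [D, D, D, hGM, hGM, hGM]
    rw [show (Real.exp (-x^2/4) / Real.Gamma (-(ν-1)) * M (-(ν-1) - 1) x)^2
        = Real.exp (-x^2/4)^2 * ((M (-(ν-1) - 1) x)^2 / Real.Gamma (-(ν-1))^2) from by ring,
      show (Real.exp (-x^2/4) / Real.Gamma (-ν) * M (-ν - 1) x) *
           (Real.exp (-x^2/4) / Real.Gamma (-(ν-2)) * M (-(ν-2) - 1) x)
        = Real.exp (-x^2/4)^2 * (M (-ν - 1) x * M (-(ν-2) - 1) x / (Real.Gamma (-ν) * Real.Gamma (-(ν-2)))) from by ring,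
      mul_div_mul_left _ _ (pow_ne_zero 2 (Real.exp_ne_zero _))]
    field_simp
  intro x y hxy
  dsimp only
  rw [hval x, hval y]
  exact mul_lt_mul_of_pos_left (hg hxy) hK
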